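/- Let α be a finite nonempty type, let H be a normal subgroup of H0, both subgroups of Perm α, let I be a nonempty type and P a subgroup of Perm I. In Perm(α × I), let W = W(H, P) be the wreath product subgroup and let Δ(H0) = {g ∈ Perm(α × I) | ∃ h0 ∈ H0, ∀ a i, g (a, i) = (h0 a, i)} be the diagonal copy of H0. Let G be the subgroup of Perm(α × I) generated by W ∪ Δ(H0). Then: (i) W is a normal subgroup of G; (ii) every element of G can be written as w · δ with w ∈ W and δ ∈ Δ(H0); (iii) the index of W in G equals the index of H in H0. -/

import Mathlib

/-- The wreath product `H ≀ P` of `H ≤ Perm α` and `P ≤ Perm I`, realized as a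
subgroup of `Perm (α × I)`. -/
def wreath {α I : Type*} (H : Subgroup (Equiv.Perm α)) (P : Subgroup (Equiv.Perm I)) :
    Subgroup (Equiv.Perm (α × I)) where
  carrier := {g | ∃ σ ∈ P, ∃ h : I → Equiv.Perm α, (∀ i, h i ∈ H) ∧
    ∀ (a : α) (i : I), g (a, i) = (h i a, σ i)}
  one_mem' := ⟨1, P.one_mem, fun _ => 1, fun _ => H.one_mem, fun _ _ => rfl⟩
  mul_mem' := by
    rintro g g' ⟨σ, hσ, h, hh, hg⟩ ⟨σ', hσ', h', hh', hg'⟩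
    refine ⟨σ * σ', P.mul_mem hσ hσ', fun i => h (σ' i) * h' i,
      fun i => H.mul_mem (hh _) (hh' _), fun a i => ?_⟩
    simp [Equiv.Perm.mul_apply, hg', hg]
  inv_mem' := by
    rintro g ⟨σ, hσ, h, hh, hg⟩
    refine ⟨σ⁻¹, P.inv_mem hσ, fun i => (h (σ⁻¹ i))⁻¹,
      fun i => H.inv_mem (hh _), fun a i => ?_⟩
    have key : g ((h (σ⁻¹ i))⁻¹ a, σ⁻¹ i) = (a, i) := by rw [hg]; simp
    rw [← key]; simp

/-- The diagonal copy `Δ(H0)` of `H0 ≤ Perm α` inside `Perm (α × I)`: elements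
acting by a common `h0 ∈ H0` within each block `α × {i}` and fixing all blocks. -/
def diagSubgroup (I : Type*) {α : Type*} (H0 : Subgroup (Equiv.Perm α)) :
    Subgroup (Equiv.Perm (α × I)) where
  carrier := {g | ∃ h ∈ H0, ∀ (a : α) (i : I), g (a, i) = (h a, i)}
  one_mem' := ⟨1, H0.one_mem, fun _ _ => rfl⟩
  mul_mem' := by
    rintro g g' ⟨h, hh, hg⟩ ⟨h', hh', hg'⟩
    exact ⟨h * h', H0.mul_mem hh hh', fun a i => by
      simp [Equiv.Perm.mul_apply, hg', hg]⟩
  inv_mem' := by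
    rintro g ⟨h, hh, hg⟩
    refine ⟨h⁻¹, H0.inv_mem hh, fun a i => ?_⟩
    have key : g (h⁻¹ a, i) = (a, i) := by rw [hg]; simp
    rw [← key]; simp

/-- Let `H ⊴ H0 ≤ Perm α` with `α` finite nonempty, `P ≤ Perm I` with `I`
nonempty, `W = W(H, P)` the wreath product and `Δ(H0)` the diagonal copy of
`H0`, and let `G = ⟨W ∪ Δ(H0)⟩`. Then `W ⊴ G`, every element of `G` is a
product `w * δ` with `w ∈ W` and `δ ∈ Δ(H0)`, and `[G : W] = [H0 : H]`. -/
theorem wreath_join_diagonal (α : Type*) [Finite α] [Nonempty α]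
    (H H0 : Subgroup (Equiv.Perm α)) (hle : H ≤ H0)
    (hnorm : ∀ h0 ∈ H0, ∀ h ∈ H, h0 * h * h0⁻¹ ∈ H)
    (I : Type*) [Nonempty I] (P : Subgroup (Equiv.Perm I)) :
    (∀ g ∈ wreath H P ⊔ diagSubgroup I H0, ∀ w ∈ wreath H P,
        g * w * g⁻¹ ∈ wreath H P) ∧
      (∀ g ∈ wreath H P ⊔ diagSubgroup I H0,
        ∃ w ∈ wreath H P, ∃ δ ∈ diagSubgroup I H0, g = w * δ) ∧
      ((wreath H P).subgroupOf (wreath H P ⊔ diagSubgroup I H0)).index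
        = (H.subgroupOf H0).index := by
  -- The diagonal embedding `Perm α →* Perm (α × I)`.
  let φ : Equiv.Perm α →* Equiv.Perm (α × I) :=
    { toFun := fun h => Equiv.prodCongr h (Equiv.refl I)
      map_one' := Equiv.ext fun x => rfl
      map_mul' := fun h h' => Equiv.ext fun x => rfl }
  have hφ : ∀ (h : Equiv.Perm α) (a : α) (i : I), φ h (a, i) = (h a, i) :=
    fun _ _ _ => rfl
  have hφinj : Function.Injective φ := by
    intro h h' hhh
    obtain ⟨i0⟩ := ‹Nonempty I›
    ext a
    have := congrArg (fun (e : Equiv.Perm (α × I)) => (e (a, i0)).1) hhh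
    simpa [hφ] using this
  -- `Δ(H0)` is the image of `H0` under `φ`, similarly any diagonal subgroup.
  have hdiag : ∀ K : Subgroup (Equiv.Perm α), diagSubgroup I K = K.map φ := by
    intro K
    ext g
    constructor
    · rintro ⟨h, hh, hg⟩
      exact ⟨h, hh, Equiv.ext fun x => by cases x with
        | mk a i => exact (hg a i).symm⟩
    · rintro ⟨h, hh, rfl⟩
      exact ⟨h, hh, fun a i => rfl⟩
  -- `Δ(H0)` normalizes `W`.
  have hconj : ∀ δ ∈ diagSubgroup I H0, ∀ w ∈ wreath H P,
      δ * w * δ⁻¹ ∈ wreath H P := by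
    rintro δ ⟨h0, hh0, hδ⟩ w ⟨σ, hσ, h, hh, hw⟩
    have hδinv : ∀ (a : α) (i : I), δ⁻¹ (a, i) = (h0⁻¹ a, i) := by
      intro a i
      have key : δ (h0⁻¹ a, i) = (a, i) := by rw [hδ]; simp
      rw [← key]; simp
    refine ⟨σ, hσ, fun i => h0 * h i * h0⁻¹, fun i => hnorm h0 hh0 _ (hh i),
      fun a i => ?_⟩
    simp only [Equiv.Perm.mul_apply, hδinv, hw, hδ]
  -- Every element of the join factors as `w * δ`.
  have hfact : ∀ g ∈ wreath H P ⊔ diagSubgroup I H0,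
      ∃ w ∈ wreath H P, ∃ δ ∈ diagSubgroup I H0, g = w * δ := by
    intro g hg
    rw [Subgroup.sup_eq_closure] at hg
    induction hg using Subgroup.closure_induction with
    | mem x hx =>
      rcases hx with hx | hx
      · exact ⟨x, hx, 1, (diagSubgroup I H0).one_mem, (mul_one x).symm⟩
      · exact ⟨1, (wreath H P).one_mem, x, hx, (one_mul x).symm⟩
    | one =>
      exact ⟨1, (wreath H P).one_mem, 1, (diagSubgroup I H0).one_mem,
        (one_mul 1).symm⟩
    | mul x y _ _ ihx ihy =>
      obtain ⟨w, hw, δ, hδ, rfl⟩ := ihx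
      obtain ⟨w', hw', δ', hδ', rfl⟩ := ihy
      exact ⟨w * (δ * w' * δ⁻¹), (wreath H P).mul_mem hw (hconj δ hδ w' hw'),
        δ * δ', (diagSubgroup I H0).mul_mem hδ hδ', by group⟩
    | inv x _ ihx =>
      obtain ⟨w, hw, δ, hδ, rfl⟩ := ihx
      have hmem := hconj δ⁻¹ ((diagSubgroup I H0).inv_mem hδ) w⁻¹
        ((wreath H P).inv_mem hw)
      rw [inv_inv] at hmem
      exact ⟨δ⁻¹ * w⁻¹ * δ, hmem, δ⁻¹, (diagSubgroup I H0).inv_mem hδ, by group⟩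
  -- `W` is normal in the join.
  have hWnorm : ∀ g ∈ wreath H P ⊔ diagSubgroup I H0, ∀ w ∈ wreath H P,
      g * w * g⁻¹ ∈ wreath H P := by
    intro g hg w' hw'
    obtain ⟨w, hw, δ, hδ, rfl⟩ := hfact g hg
    have : w * δ * w' * (w * δ)⁻¹ = w * (δ * w' * δ⁻¹) * w⁻¹ := by group
    rw [this]
    exact (wreath H P).mul_mem ((wreath H P).mul_mem hw (hconj δ hδ w' hw'))
      ((wreath H P).inv_mem hw)
  refine ⟨hWnorm, hfact, ?_⟩
  -- Index computation.
  set G := wreath H P ⊔ diagSubgroup I H0 with hG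
  have hWle : wreath H P ≤ G := le_sup_left
  have hΔle : diagSubgroup I H0 ≤ G := le_sup_right
  have hnormal : ((wreath H P).subgroupOf G).Normal := by
    constructor
    intro n hn g
    rw [Subgroup.mem_subgroupOf] at hn ⊢
    exact hWnorm g.1 g.2 n.1 hn
  have hsup : (diagSubgroup I H0).subgroupOf G ⊔ (wreath H P).subgroupOf G = ⊤ := by
    rw [eq_top_iff]
    rintro ⟨g, hg⟩ -
    obtain ⟨w, hw, δ, hδ, rfl⟩ := hfact g hg
    have heq : (⟨w * δ, hg⟩ : G) = ⟨w, hWle hw⟩ * ⟨δ, hΔle hδ⟩ := rfl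
    rw [heq]
    exact Subgroup.mul_mem _
      (Subgroup.mem_sup_right (Subgroup.mem_subgroupOf.mpr hw))
      (Subgroup.mem_sup_left (Subgroup.mem_subgroupOf.mpr hδ))
  -- Intersection of `W` with the diagonal is the diagonal copy of `H`.
  have hinf : wreath H P ⊓ diagSubgroup I H0 = diagSubgroup I H := by
    ext g
    constructor
    · rintro ⟨⟨σ, hσ, h, hh, hw⟩, ⟨h0, hh0, hδ⟩⟩
      obtain ⟨i0⟩ := ‹Nonempty I›
      have hh0' : h0 = h i0 := by
        ext a
        have := (hw a i0).symm.trans (hδ a i0)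
        exact (Prod.mk.injEq _ _ _ _ ▸ this).1.symm
      exact ⟨h0, hh0' ▸ hh i0, hδ⟩
    · rintro ⟨h, hh, hg⟩
      exact ⟨⟨1, P.one_mem, fun _ => h, fun _ => hh, fun a i => hg a i⟩,
        ⟨h, hle hh, hg⟩⟩
  calc ((wreath H P).subgroupOf G).index
      = ((wreath H P).subgroupOf G).relIndex ⊤ :=
        (Subgroup.relIndex_top_right _).symm
    _ = ((wreath H P).subgroupOf G).relIndex
          ((diagSubgroup I H0).subgroupOf G ⊔ (wreath H P).subgroupOf G) := by
        rw [hsup]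
    _ = ((wreath H P).subgroupOf G).relIndex
          ((diagSubgroup I H0).subgroupOf G) :=
        Subgroup.relIndex_sup_right _ _
    _ = (wreath H P).relIndex (diagSubgroup I H0) :=
        Subgroup.relIndex_subgroupOf hΔle
    _ = (wreath H P ⊓ diagSubgroup I H0).relIndex (diagSubgroup I H0) :=
        (Subgroup.inf_relIndex_right _ _).symm
    _ = (H.map φ).relIndex (H0.map φ) := by rw [hinf, hdiag H, hdiag H0]
    _ = (Subgroup.comap φ (H.map φ)).relIndex H0 :=
        (Subgroup.relIndex_comap (H := H.map φ) φ H0).symm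
    _ = H.relIndex H0 := by
        rw [Subgroup.comap_map_eq_self_of_injective hφinj]
    _ = (H.subgroupOf H0).index := rfl
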